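/- (Bretagnolle–Huber inequality) For any two probability measures P and Q on a finite set, the total variation distance satisfies D_TV(P, Q) \le \sqrt{1 - exp(-D_KL(P || Q))}. -/

import Mathlib

open Finset Real

/-- Bretagnolle–Huber inequality for total variation distance
(stated in the nontrivial case where P is absolutely continuous w.r.t. Q,
so that the KL divergence is finite). -/
theorem bretagnolle_huber
    {Ω : Type*} [Fintype Ω]
    (P Q : Ω → ℝ)
    (hP0 : ∀ x, 0 ≤ P x) (hP1 : ∑ x, P x = 1)
    (hQ0 : ∀ x, 0 ≤ Q x) (hQ1 : ∑ x, Q x = 1)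
    (hac : ∀ x, 0 < P x → 0 < Q x) :
    (1 / 2) * ∑ x, |P x - Q x| ≤
      Real.sqrt (1 - Real.exp (-(∑ x, P x * Real.log (P x / Q x)))) := by
  classical
  set TV : ℝ := (1 / 2) * ∑ x, |P x - Q x| with hTVdef
  set KL : ℝ := ∑ x, P x * Real.log (P x / Q x) with hKLdef
  set t : Finset Ω := Finset.univ.filter (fun x => 0 < P x) with ht
  have hPt : ∀ x ∈ t, 0 < P x := fun x hx => (Finset.mem_filter.mp hx).2
  have hQt : ∀ x ∈ t, 0 < Q x := fun x hx => hac x (hPt x hx)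
  have hPzero : ∀ x ∈ (Finset.univ \ t), P x = 0 := by
    intro x hx
    have := Finset.mem_sdiff.mp hx
    have : ¬ 0 < P x := fun h => this.2 (Finset.mem_filter.mpr ⟨Finset.mem_univ x, h⟩)
    linarith [hP0 x, not_lt.mp this]
  have hsumPt : ∑ x ∈ t, P x = 1 := by
    have hext : ∑ x ∈ t, P x = ∑ x, P x := by
      refine Finset.sum_subset (Finset.subset_univ t) ?_
      intro x _ hxt
      have : ¬ 0 < P x := fun h => hxt (Finset.mem_filter.mpr ⟨Finset.mem_univ x, h⟩)
      linarith [hP0 x, not_lt.mp this]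
    rw [hext, hP1]
  -- Jensen's inequality for log
  have hJ : ∑ x ∈ t, P x • Real.log (Real.sqrt (Q x / P x)) ≤
      Real.log (∑ x ∈ t, P x • Real.sqrt (Q x / P x)) := by
    refine (strictConcaveOn_log_Ioi.concaveOn).le_map_sum
      (fun x hx => (hPt x hx).le) hsumPt ?_
    intro x hx
    exact Real.sqrt_pos.mpr (div_pos (hQt x hx) (hPt x hx))
  -- rewrite the two sides of Jensen
  have hsub : ∑ x ∈ t, P x * Real.log (P x / Q x) = KL := by
    rw [hKLdef]
    refine Finset.sum_subset (Finset.subset_univ t) ?_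
    intro x _ hxt
    have : ¬ 0 < P x := fun h => hxt (Finset.mem_filter.mpr ⟨Finset.mem_univ x, h⟩)
    have : P x = 0 := le_antisymm (not_lt.mp this) (hP0 x)
    simp [this]
  have hL : ∑ x ∈ t, P x • Real.log (Real.sqrt (Q x / P x)) = -(KL / 2) := by
    have hterm : ∀ x ∈ t, P x • Real.log (Real.sqrt (Q x / P x))
        = -(P x * Real.log (P x / Q x)) / 2 := by
      intro x hx
      have hq := hQt x hx
      have hp := hPt x hx
      have hlog : Real.log (Q x / P x) = -Real.log (P x / Q x) := by
        rw [← Real.log_inv, inv_div]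
      rw [smul_eq_mul, Real.log_sqrt (div_nonneg hq.le hp.le), hlog]
      ring
    rw [Finset.sum_congr rfl hterm, ← Finset.sum_div, Finset.sum_neg_distrib, hsub]; ring
  have hR : ∑ x ∈ t, P x • Real.sqrt (Q x / P x) = ∑ x ∈ t, Real.sqrt (P x * Q x) := by
    refine Finset.sum_congr rfl ?_
    intro x hx
    have hp := hPt x hx
    rw [smul_eq_mul]
    rw [show P x * Q x = (P x)^2 * (Q x / P x) by field_simp,
      Real.sqrt_mul (sq_nonneg _), Real.sqrt_sq hp.le]
  set S : ℝ := ∑ x ∈ t, Real.sqrt (P x * Q x) with hS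
  have hSpos : 0 < S := by
    have hne : t.Nonempty := by
      by_contra h
      rw [Finset.not_nonempty_iff_eq_empty] at h
      rw [h, Finset.sum_empty] at hsumPt
      norm_num at hsumPt
    refine Finset.sum_pos ?_ hne
    intro x hx
    exact Real.sqrt_pos.mpr (mul_pos (hPt x hx) (hQt x hx))
  have hexp : Real.exp (-KL) ≤ S ^ 2 := by
    have h1 : -(KL/2) ≤ Real.log S := by rw [← hL, ← hR]; exact hJ
    have h2 : Real.exp (-(KL/2)) ≤ S := by
      calc Real.exp (-(KL/2)) ≤ Real.exp (Real.log S) := Real.exp_le_exp.mpr h1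
        _ = S := Real.exp_log hSpos
    calc Real.exp (-KL) = Real.exp (-(KL/2)) ^ 2 := by
          rw [← Real.exp_nat_mul]; congr 1; push_cast; ring
      _ ≤ S ^ 2 := by
          refine pow_le_pow_left₀ (Real.exp_nonneg _) h2 2
  -- Cauchy-Schwarz
  have hCS : S ^ 2 ≤ (∑ x, min (P x) (Q x)) * (∑ x, max (P x) (Q x)) := by
    have hSle : S ≤ ∑ x, Real.sqrt (P x * Q x) := by
      refine Finset.sum_le_sum_of_subset_of_nonneg (Finset.subset_univ t) ?_
      intro x _ _; exact Real.sqrt_nonneg _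
    have h1 : S ^ 2 ≤ (∑ x, Real.sqrt (P x * Q x)) ^ 2 :=
      pow_le_pow_left₀ hSpos.le hSle 2
    refine h1.trans ?_
    refine Finset.sum_sq_le_sum_mul_sum_of_sq_eq_mul Finset.univ
      (fun x _ => le_min (hP0 x) (hQ0 x))
      (fun x _ => le_max_of_le_left (hP0 x)) ?_
    intro x _
    rw [Real.sq_sqrt (mul_nonneg (hP0 x) (hQ0 x))]
    rcases le_total (P x) (Q x) with h | h
    · rw [min_eq_left h, max_eq_right h]
    · rw [min_eq_right h, max_eq_left h]; ring
  -- sums of min and max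
  have hmm : (∑ x, min (P x) (Q x)) + (∑ x, max (P x) (Q x)) = 2 := by
    rw [← Finset.sum_add_distrib]
    have : ∀ x : Ω, min (P x) (Q x) + max (P x) (Q x) = P x + Q x :=
      fun x => min_add_max _ _
    rw [Finset.sum_congr rfl (fun x _ => this x), Finset.sum_add_distrib, hP1, hQ1]
    norm_num
  have hmM : (∑ x, max (P x) (Q x)) - (∑ x, min (P x) (Q x)) = ∑ x, |P x - Q x| := by
    rw [← Finset.sum_sub_distrib]
    exact Finset.sum_congr rfl (fun x _ => by rw [abs_sub_comm]; exact max_sub_min_eq_abs _ _)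
  have hmin : (∑ x, min (P x) (Q x)) = 1 - TV := by
    rw [hTVdef]; linarith
  have hmax : (∑ x, max (P x) (Q x)) = 1 + TV := by
    rw [hTVdef]; linarith
  have hkey : Real.exp (-KL) ≤ 1 - TV ^ 2 := by
    calc Real.exp (-KL) ≤ S ^ 2 := hexp
      _ ≤ (1 - TV) * (1 + TV) := by rw [← hmin, ← hmax]; exact hCS
      _ = 1 - TV ^ 2 := by ring
  exact Real.le_sqrt_of_sq_le (by linarith)
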